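/- In a geometric mobile sensor network given by n lines labeled so that line k is kx + (n+1-k)y = k(n+1-k) for 1 ≤ k ≤ n, if max{i,j} < k, then the packet {i,j} cannot reach sensor k; consequently the total number of deliveries is at most Σ_{k=1}^n k(k-1), giving capacity at most 2(n+1)/(3n). -/
import Mathlib


namespace Stmt19

/-- The x-coordinate of the intersection of lines `i` and `j`
in the family `k·x + (n+1-k)·y = k(n+1-k)`, `1 ≤ k ≤ n`. -/
noncomputable def xc (n i j : ℕ) : ℝ :=
  (((n : ℝ) + 1 - i) * ((n : ℝ) + 1 - j)) / ((n : ℝ) + 1)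

/-- One step of a delivery chain: move from packet `p` to a valid packet `q`
sharing a sensor with `p`, whose intersection has an x-coordinate at least that of `p`. -/
def step (n : ℕ) (p q : ℕ × ℕ) : Prop :=
  (1 ≤ q.1 ∧ q.1 ≤ n ∧ 1 ≤ q.2 ∧ q.2 ≤ n ∧ q.1 ≠ q.2) ∧
  (p.1 = q.1 ∨ p.1 = q.2 ∨ p.2 = q.1 ∨ p.2 = q.2) ∧
  xc n p.1 p.2 ≤ xc n q.1 q.2

/-- Packet `{i,j}` can reach sensor `x` in the GMSN given by the lines
`k·x + (n+1-k)·y = k(n+1-k)`. -/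
def canReach (n i j x : ℕ) : Prop :=
  ∃ q : ℕ × ℕ, Relation.ReflTransGen (step n) (i, j) q ∧ (x = q.1 ∨ x = q.2)

/-- In the GMSN given by the lines `k·x + (n+1-k)·y = k(n+1-k)` for `1 ≤ k ≤ n`,
if `max{i,j} < k` then packet `{i,j}` cannot reach sensor `k`; consequently the
total number of deliveries is at most `Σ_{k=1}^n k(k-1)`, and the capacity is at most
`2(n+1)/(3n)`. -/
lemma key (n a b c : ℕ) (hc : c ≤ n)
    (h : ((n:ℝ)+1-a)*((n:ℝ)+1-c) ≤ ((n:ℝ)+1-b)*((n:ℝ)+1-c)) : b ≤ a := by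
  have hc' : (c:ℝ) ≤ n := by exact_mod_cast hc
  have hpos : (0:ℝ) < (n:ℝ)+1-c := by linarith
  have h2 : ((n:ℝ)+1-a) ≤ ((n:ℝ)+1-b) := le_of_mul_le_mul_right h hpos
  have : (b:ℝ) ≤ a := by linarith
  exact_mod_cast this

lemma step_max (n : ℕ) {p q : ℕ×ℕ} (hp1 : p.1 ≤ n) (hp2 : p.2 ≤ n)
    (h : step n p q) : max q.1 q.2 ≤ max p.1 p.2 := by
  obtain ⟨⟨_, hq1, _, hq2, _⟩, hsh, hxc⟩ := h
  have hd : (0:ℝ) < (n:ℝ)+1 := by positivity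
  rw [xc, xc, div_le_div_iff₀ hd hd] at hxc
  have hnum : ((n:ℝ)+1-p.1)*((n:ℝ)+1-p.2) ≤ ((n:ℝ)+1-q.1)*((n:ℝ)+1-q.2) :=
    le_of_mul_le_mul_right hxc hd
  rcases hsh with hc | hc | hc | hc
  · -- p.1 = q.1
    have : q.2 ≤ p.2 := key n p.2 q.2 q.1 hq1 (by rw [hc] at hnum; ring_nf; ring_nf at hnum; linarith)
    omega
  · -- p.1 = q.2
    have : q.1 ≤ p.2 := key n p.2 q.1 q.2 hq2 (by rw [hc] at hnum; ring_nf; ring_nf at hnum; linarith)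
    omega
  · -- p.2 = q.1
    have : q.2 ≤ p.1 := key n p.1 q.2 q.1 hq1 (by rw [hc] at hnum; ring_nf; ring_nf at hnum; linarith)
    omega
  · -- p.2 = q.2
    have : q.1 ≤ p.1 := key n p.1 q.1 q.2 hq2 (by rw [hc] at hnum; ring_nf; ring_nf at hnum; linarith)
    omega

lemma reach_bound (n : ℕ) {p q : ℕ×ℕ} (hp1 : p.1 ≤ n) (hp2 : p.2 ≤ n)
    (h : Relation.ReflTransGen (step n) p q) :
    q.1 ≤ n ∧ q.2 ≤ n ∧ max q.1 q.2 ≤ max p.1 p.2 := by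
  induction h with
  | refl => exact ⟨hp1, hp2, le_rfl⟩
  | tail h1 h2 ih =>
    obtain ⟨hb1, hb2, hbm⟩ := ih
    have := step_max n hb1 hb2 h2
    exact ⟨h2.1.2.1, h2.1.2.2.2.1, le_trans this hbm⟩

lemma sum3 (n : ℕ) : 3 * ∑ k ∈ Finset.Icc 1 n, k * (k - 1) = (n-1)*n*(n+1) := by
  induction n with
  | zero => simp
  | succ m ih =>
    rw [Finset.sum_Icc_succ_top (by omega)]
    rw [Nat.mul_add, ih]
    cases m with
    | zero => decide
    | succ l =>
      simp only [Nat.succ_sub_one]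
      ring

lemma choose2 (n : ℕ) : 2 * n.choose 2 = n * (n-1) := by
  induction n with
  | zero => simp
  | succ m ih =>
    rw [Nat.choose_succ_succ, Nat.mul_add, ih, Nat.choose_one_right]
    cases m with
    | zero => decide
    | succ l =>
      simp only [Nat.succ_sub_one]
      ring

theorem stmt_19 (n : ℕ) (hn : 2 ≤ n) :
    (∀ i j k : ℕ, 1 ≤ i → i ≤ n → 1 ≤ j → j ≤ n → i ≠ j → k ≤ n → max i j < k →
      ¬ canReach n i j k) ∧
    {p : (ℕ × ℕ) × ℕ | 1 ≤ p.1.1 ∧ p.1.1 < p.1.2 ∧ p.1.2 ≤ n ∧ 1 ≤ p.2 ∧ p.2 ≤ n ∧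
        canReach n p.1.1 p.1.2 p.2}.ncard ≤ ∑ k ∈ Finset.Icc 1 n, k * (k - 1) ∧
    (({p : (ℕ × ℕ) × ℕ | 1 ≤ p.1.1 ∧ p.1.1 < p.1.2 ∧ p.1.2 ≤ n ∧ 1 ≤ p.2 ∧ p.2 ≤ n ∧
        canReach n p.1.1 p.1.2 p.2}.ncard : ℚ) / ((n : ℚ) * (n.choose 2 : ℚ))
      ≤ 2 * ((n : ℚ) + 1) / (3 * (n : ℚ))) := by
  have part1 : ∀ i j k : ℕ, 1 ≤ i → i ≤ n → 1 ≤ j → j ≤ n → i ≠ j → k ≤ n → max i j < k →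
      ¬ canReach n i j k := by
    rintro i j k h1 h2 h3 h4 hne hk hmax ⟨q, hr, hx⟩
    have hb := reach_bound n (p := (i, j)) h2 h4 hr
    rcases hx with rfl | rfl
    · have := le_max_left q.1 q.2; omega
    · have := le_max_right q.1 q.2; omega
  refine ⟨part1, ?_⟩
  set S := {p : (ℕ × ℕ) × ℕ | 1 ≤ p.1.1 ∧ p.1.1 < p.1.2 ∧ p.1.2 ≤ n ∧ 1 ≤ p.2 ∧ p.2 ≤ n ∧
        canReach n p.1.1 p.1.2 p.2} with hSdef
  set T : Finset ((ℕ × ℕ) × ℕ) :=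
    (Finset.Icc 1 n).biUnion
      (fun j => ((Finset.Icc 1 (j-1)) ×ˢ ({j} : Finset ℕ)) ×ˢ Finset.Icc 1 j) with hTdef
  have hsub : S ⊆ ↑T := by
    rintro ⟨⟨a, b⟩, c⟩ ⟨h1, h2, h3, h4, h5, h6⟩
    dsimp only at h1 h2 h3 h4 h5 h6
    have hcb : c ≤ b := by
      by_contra hcb
      exact part1 a b c h1 (by omega) (by omega) h3 (by omega) h5 (by omega) h6
    show ((a, b), c) ∈ (Finset.Icc 1 n).biUnion
      (fun j => ((Finset.Icc 1 (j-1)) ×ˢ ({j} : Finset ℕ)) ×ˢ Finset.Icc 1 j)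
    simp only [Finset.mem_biUnion, Finset.mem_product, Finset.mem_singleton, Finset.mem_Icc]
    exact ⟨b, ⟨by omega, h3⟩, ⟨⟨by omega, by omega⟩, rfl⟩, by omega, hcb⟩
  have hTcard : T.card = ∑ k ∈ Finset.Icc 1 n, k * (k - 1) := by
    rw [hTdef, Finset.card_biUnion]
    · refine Finset.sum_congr rfl fun j _ => ?_
      simp [Nat.card_Icc, Nat.mul_comm]
    · intro x hx y hy hxy
      simp only [Finset.disjoint_left]
      intro p hmx hmy
      obtain ⟨⟨a, b⟩, c⟩ := p
      simp only [Finset.mem_product, Finset.mem_singleton] at hmx hmy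
      exact hxy (hmx.1.2.symm.trans hmy.1.2)
  have hcard : S.ncard ≤ ∑ k ∈ Finset.Icc 1 n, k * (k - 1) := by
    calc S.ncard ≤ (↑T : Set ((ℕ × ℕ) × ℕ)).ncard :=
          Set.ncard_le_ncard hsub T.finite_toSet
      _ = T.card := Set.ncard_coe_finset T
      _ = _ := hTcard
  refine ⟨hcard, ?_⟩
  have h3s := sum3 n
  have hch := choose2 n
  have hnpos : (0 : ℚ) < n := by positivity
  have hchpos : (0 : ℚ) < (n.choose 2 : ℚ) := by
    exact_mod_cast Nat.choose_pos hn
  rw [div_le_div_iff₀ (by positivity) (by positivity)]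
  have hS : (S.ncard : ℚ) ≤ ((∑ k ∈ Finset.Icc 1 n, k * (k - 1) : ℕ) : ℚ) := by
    exact_mod_cast hcard
  have key : ((∑ k ∈ Finset.Icc 1 n, k * (k - 1) : ℕ) : ℚ) * (3 * n)
      ≤ 2 * ((n : ℚ) + 1) * ((n : ℚ) * (n.choose 2 : ℚ)) := by
    have hnat : (∑ k ∈ Finset.Icc 1 n, k * (k - 1)) * (3 * n)
        = 2 * (n + 1) * (n * n.choose 2) := by
      have h1 : (∑ k ∈ Finset.Icc 1 n, k * (k - 1)) * (3 * n)
          = (3 * ∑ k ∈ Finset.Icc 1 n, k * (k - 1)) * n := by ring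
      have h2 : 2 * (n + 1) * (n * n.choose 2) = ((n + 1) * n) * (2 * n.choose 2) := by ring
      rw [h1, h3s, h2, hch]; ring
    exact_mod_cast le_of_eq hnat
  nlinarith [hS, key, mul_nonneg (le_of_lt hnpos) (le_of_lt hchpos)]

end Stmt19
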